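/- Let ξ and Y be real numbers with 1 ≤ ξ ≤ Y. Then ∫_Y^∞ e^{-u} u^ξ du ≤ e^{-Y} Y^ξ (1 + ξ²/Y). -/

import Mathlib

open Real MeasureTheory Set Filter Topology

/-- `e^{-u} u^ξ` is decreasing past `ξ` (for `ξ ≥ 0`, `Y ≥ ξ`, `u ≥ Y`). -/
lemma decay_aux (ξ Y u : ℝ) (hξ : 0 ≤ ξ) (hY : ξ ≤ Y) (hY0 : 0 < Y) (hu : Y ≤ u) :
    Real.exp (-u) * u ^ ξ ≤ Real.exp (-Y) * Y ^ ξ := by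
  have hu0 : 0 < u := lt_of_lt_of_le hY0 hu
  have hq : 0 < u / Y := div_pos hu0 hY0
  have h1 : u ^ ξ = Y ^ ξ * (u / Y) ^ ξ := by
    rw [← Real.mul_rpow hY0.le hq.le, mul_div_cancel₀ _ hY0.ne']
  have h2 : (u / Y) ^ ξ = Real.exp (ξ * Real.log (u / Y)) := by
    rw [Real.rpow_def_of_pos hq, mul_comm]
  have h3 : ξ * Real.log (u / Y) ≤ u - Y := by
    have hlog : Real.log (u / Y) ≤ u / Y - 1 := Real.log_le_sub_one_of_pos hq
    have hlog0 : 0 ≤ Real.log (u / Y) := by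
      apply Real.log_nonneg
      rw [le_div_iff₀ hY0]; linarith
    calc ξ * Real.log (u / Y) ≤ Y * Real.log (u / Y) := by
          apply mul_le_mul_of_nonneg_right hY hlog0
      _ ≤ Y * (u / Y - 1) := by
          apply mul_le_mul_of_nonneg_left hlog hY0.le
      _ = u - Y := by field_simp
  calc Real.exp (-u) * u ^ ξ = Real.exp (-u) * (Y ^ ξ * Real.exp (ξ * Real.log (u / Y))) := by
        rw [h1, h2]
    _ ≤ Real.exp (-u) * (Y ^ ξ * Real.exp (u - Y)) := by
        apply mul_le_mul_of_nonneg_left _ (Real.exp_pos _).le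
        apply mul_le_mul_of_nonneg_left (Real.exp_le_exp.mpr h3) (Real.rpow_nonneg hY0.le _)
    _ = Real.exp (-Y) * Y ^ ξ := by
        have he : -u + (u - Y) = -Y := by ring
        rw [mul_comm (Y ^ ξ), ← mul_assoc, ← Real.exp_add, he]

theorem incomplete_gamma_tail_bound (ξ Y : ℝ) (hξ : 1 ≤ ξ) (hY : ξ ≤ Y) :
    ∫ u in Set.Ioi Y, Real.exp (-u) * u ^ ξ ≤
      Real.exp (-Y) * Y ^ ξ * (1 + ξ ^ 2 / Y) := by
  have hY1 : 1 ≤ Y := le_trans hξ hY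
  have hY0 : 0 < Y := lt_of_lt_of_le one_pos hY1
  set C : ℝ := ξ * (ξ - 1) * (Real.exp (-Y) * Y ^ ξ) with hC
  have hC0 : 0 ≤ C := by
    apply mul_nonneg (mul_nonneg (by linarith) (by linarith))
    positivity
  set φ : ℝ → ℝ := fun u => -(Real.exp (-u) * u ^ ξ + ξ * (Real.exp (-u) * u ^ (ξ - 1)) + C / u)
    with hφ
  set ψ : ℝ → ℝ := fun u =>
      Real.exp (-u) * u ^ ξ - ξ * (ξ - 1) * (Real.exp (-u) * u ^ (ξ - 2)) + C / u ^ 2 with hψ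
  -- derivative
  have hderiv : ∀ u ∈ Ici Y, HasDerivAt φ (ψ u) u := by
    intro u hu
    have hu0 : 0 < u := lt_of_lt_of_le hY0 hu
    have hexp : HasDerivAt (fun u : ℝ => Real.exp (-u)) (-Real.exp (-u)) u := by
      simpa using ((hasDerivAt_id u).neg.exp)
    have hp1 : HasDerivAt (fun u : ℝ => u ^ ξ) (ξ * u ^ (ξ - 1)) u :=
      Real.hasDerivAt_rpow_const (Or.inl hu0.ne')
    have hp2 : HasDerivAt (fun u : ℝ => u ^ (ξ - 1)) ((ξ - 1) * u ^ (ξ - 2)) u := by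
      have := Real.hasDerivAt_rpow_const (p := ξ - 1) (x := u) (Or.inl hu0.ne')
      have h : ξ - 1 - 1 = ξ - 2 := by ring
      rwa [h] at this
    have hinv : HasDerivAt (fun u : ℝ => C / u) (-(C / u ^ 2)) u := by
      have := (hasDerivAt_inv hu0.ne').const_mul C
      simpa [div_eq_mul_inv, mul_comm] using this
    have h1 := hexp.mul hp1
    have h2 := (hexp.mul hp2).const_mul ξ
    have hsum := ((h1.add h2).add hinv).neg
    refine hsum.congr_deriv ?_
    simp only [hψ]
    ring
  -- tendsto 0 at infinity
  have htend : Tendsto φ atTop (𝓝 0) := by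
    have t1 : Tendsto (fun u : ℝ => Real.exp (-u) * u ^ ξ) atTop (𝓝 0) := by
      have := tendsto_rpow_mul_exp_neg_mul_atTop_nhds_zero ξ 1 one_pos
      refine this.congr fun u => ?_
      rw [neg_one_mul, mul_comm]
    have t2 : Tendsto (fun u : ℝ => ξ * (Real.exp (-u) * u ^ (ξ - 1))) atTop (𝓝 (ξ * 0)) := by
      apply Tendsto.const_mul
      have := tendsto_rpow_mul_exp_neg_mul_atTop_nhds_zero (ξ - 1) 1 one_pos
      refine this.congr fun u => ?_
      rw [neg_one_mul, mul_comm]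
    have t3 : Tendsto (fun u : ℝ => C / u) atTop (𝓝 0) := by
      simpa using tendsto_const_nhds.div_atTop (tendsto_id (α := ℝ))
    have h := ((t1.add t2).add t3).neg
    have h0 : -((0:ℝ) + ξ * 0 + 0) = 0 := by ring
    rw [h0] at h
    exact h
  -- integrability pieces
  have hf_int : IntegrableOn (fun u : ℝ => Real.exp (-u) * u ^ ξ) (Ioi Y) := by
    have := Real.GammaIntegral_convergent (s := ξ + 1) (by linarith)
    have h2 : IntegrableOn (fun x : ℝ => Real.exp (-x) * x ^ ξ) (Ioi 0) := by
      simpa using this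
    exact h2.mono_set (Ioi_subset_Ioi hY0.le)
  have hmeas2 : AEStronglyMeasurable (fun u : ℝ => Real.exp (-u) * u ^ (ξ - 2))
      (volume.restrict (Ioi Y)) := by
    apply ContinuousOn.aestronglyMeasurable _ measurableSet_Ioi
    apply ContinuousOn.mul (Continuous.continuousOn (by continuity))
    intro x hx
    exact (Real.continuousAt_rpow_const x (ξ - 2)
      (Or.inl (ne_of_gt (lt_trans hY0 hx)))).continuousWithinAt
  have hg_int : IntegrableOn (fun u : ℝ => Real.exp (-u) * u ^ (ξ - 2)) (Ioi Y) := by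
    apply Integrable.mono hf_int hmeas2
    filter_upwards [ae_restrict_mem measurableSet_Ioi] with u hu
    have hu1 : 1 ≤ u := le_trans hY1 (le_of_lt hu)
    have hu0 : 0 < u := lt_of_lt_of_le one_pos hu1
    rw [Real.norm_eq_abs, Real.norm_eq_abs, abs_of_nonneg (by positivity),
      abs_of_nonneg (by positivity)]
    apply mul_le_mul_of_nonneg_left _ (Real.exp_pos _).le
    exact Real.rpow_le_rpow_of_exponent_le hu1 (by linarith)
  have hinv_int : IntegrableOn (fun u : ℝ => C / u ^ 2) (Ioi Y) := by
    have h := (integrableOn_Ioi_rpow_of_lt (a := (-2 : ℝ)) (by norm_num) hY0).const_mul C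
    apply MeasureTheory.IntegrableOn.congr_fun h _ measurableSet_Ioi
    intro x hx
    have hx0 : 0 < x := lt_trans hY0 hx
    show C * x ^ (-2 : ℝ) = C / x ^ 2
    rw [show (-2 : ℝ) = -((2:ℕ):ℝ) by norm_num, Real.rpow_neg hx0.le, Real.rpow_natCast,
      div_eq_mul_inv]
  have hψ_int : IntegrableOn ψ (Ioi Y) := by
    apply Integrable.add _ hinv_int
    exact hf_int.sub (hg_int.const_mul _)
  -- FTC
  have hFTC : ∫ u in Ioi Y, ψ u = 0 - φ Y :=
    integral_Ioi_of_hasDerivAt_of_tendsto (hderiv Y self_mem_Ici).continuousAt.continuousWithinAt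
      (fun x hx => hderiv x (Ioi_subset_Ici_self hx)) hψ_int htend
  -- pointwise bound f ≤ ψ on Ioi Y
  have hle : ∀ u ∈ Ioi Y, Real.exp (-u) * u ^ ξ ≤ ψ u := by
    intro u hu
    have huY : Y ≤ u := le_of_lt hu
    have hu0 : 0 < u := lt_of_lt_of_le hY0 huY
    have key : ξ * (ξ - 1) * (Real.exp (-u) * u ^ (ξ - 2)) ≤ C / u ^ 2 := by
      have hrw : u ^ (ξ - 2) = u ^ ξ / u ^ 2 := by
        rw [eq_div_iff (by positivity), ← Real.rpow_natCast u 2, ← Real.rpow_add hu0]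
        norm_num
      have hd := decay_aux ξ Y u (by linarith) hY hY0 huY
      rw [hrw, hC]
      have heq : ξ * (ξ - 1) * (Real.exp (-u) * (u ^ ξ / u ^ 2))
          = ξ * (ξ - 1) * (Real.exp (-u) * u ^ ξ) / u ^ 2 := by ring
      rw [heq, div_le_div_iff_of_pos_right (by positivity)]
      exact mul_le_mul_of_nonneg_left hd (by nlinarith)
    simp only [hψ]
    linarith
  -- combine
  have hmono : ∫ u in Ioi Y, Real.exp (-u) * u ^ ξ ≤ ∫ u in Ioi Y, ψ u :=
    setIntegral_mono_on hf_int hψ_int measurableSet_Ioi hle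
  rw [hFTC] at hmono
  have hYpow : Y ^ (ξ - 1) = Y ^ ξ / Y := by
    rw [Real.rpow_sub hY0, Real.rpow_one]
  calc ∫ u in Ioi Y, Real.exp (-u) * u ^ ξ ≤ 0 - φ Y := hmono
    _ = Real.exp (-Y) * Y ^ ξ * (1 + ξ ^ 2 / Y) := by
        simp only [hφ, hC, hYpow]
        field_simp
        ring
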